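/- Let E be a non-empty subset of [1,2] and let a ∈ (0,1). Then there exists a constant C depending only on a such that ∫_1^2 d(t,E)^{−1+a} dt ≤ C (1 + ∫_0^1 λ^{a} N(E,λ) dλ/λ). -/

import Mathlib

open MeasureTheory Set
open scoped ENNReal

noncomputable def entropyNum (E : Set ℝ) (δ : ℝ) : ℕ :=
  Set.ncard {k : ℕ | (E ∩ Set.Icc (k * δ) ((k + 1) * δ)).Nonempty}

lemma entropy_finite (E : Set ℝ) (hE2 : E ⊆ Set.Icc 1 2) {δ : ℝ} (hδ : 0 < δ) :
    {k : ℕ | (E ∩ Set.Icc (k * δ) ((k + 1) * δ)).Nonempty}.Finite := by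
  apply Set.Finite.subset (Set.finite_Iic ⌈2 / δ⌉₊)
  rintro k ⟨x, hxE, hx1, -⟩
  have hx2 := (hE2 hxE).2
  have h : (k:ℝ) ≤ 2 / δ := by rw [le_div_iff₀ hδ]; linarith
  have : k ≤ ⌈2/δ⌉₊ := by exact_mod_cast h.trans (Nat.le_ceil _)
  exact this

lemma measure_near (E : Set ℝ) (hne : E.Nonempty) (hE2 : E ⊆ Set.Icc 1 2)
    {δ : ℝ} (hδ : 0 < δ) :
    volume ({t : ℝ | Metric.infDist t E ≤ δ} ∩ Set.Icc 1 2) ≤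
      (entropyNum E δ : ℝ≥0∞) * ENNReal.ofReal (5 * δ) := by
  have hfin := entropy_finite E hE2 hδ
  have hsub : {t : ℝ | Metric.infDist t E ≤ δ} ∩ Set.Icc 1 2 ⊆
      ⋃ k ∈ hfin.toFinset, Set.Icc ((k:ℝ) * δ - 2 * δ) (((k:ℝ) + 1) * δ + 2 * δ) := by
    rintro t ⟨ht, -⟩
    have hlt : Metric.infDist t E < 2 * δ := lt_of_le_of_lt ht (by linarith)
    obtain ⟨x, hxE, hdx⟩ := (Metric.infDist_lt_iff hne).mp hlt
    have hx0 : 0 ≤ x / δ := div_nonneg (by linarith [(hE2 hxE).1]) hδ.le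
    set k := ⌊x / δ⌋₊ with hk
    have hk1 : (k:ℝ) * δ ≤ x := by
      rw [← le_div_iff₀ hδ]; exact Nat.floor_le hx0
    have hk2 : x ≤ ((k:ℝ)+1) * δ := by
      rw [← div_le_iff₀ hδ]; exact (Nat.lt_floor_add_one _).le
    have hkS : k ∈ hfin.toFinset := by
      rw [Set.Finite.mem_toFinset]
      exact ⟨x, hxE, hk1, hk2⟩
    refine Set.mem_biUnion hkS ?_
    have habs := abs_lt.mp (by rwa [Real.dist_eq] at hdx)
    exact ⟨by linarith [habs.2], by linarith [habs.1]⟩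
  calc volume ({t : ℝ | Metric.infDist t E ≤ δ} ∩ Set.Icc 1 2)
      ≤ volume (⋃ k ∈ hfin.toFinset, Set.Icc ((k:ℝ) * δ - 2 * δ) (((k:ℝ) + 1) * δ + 2 * δ)) :=
        measure_mono hsub
    _ ≤ ∑ k ∈ hfin.toFinset, volume (Set.Icc ((k:ℝ) * δ - 2 * δ) (((k:ℝ) + 1) * δ + 2 * δ)) :=
        measure_biUnion_finset_le _ _
    _ = ∑ k ∈ hfin.toFinset, ENNReal.ofReal (5 * δ) := by
        refine Finset.sum_congr rfl fun k _ => ?_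
        rw [Real.volume_Icc]
        congr 1; ring
    _ = (entropyNum E δ : ℝ≥0∞) * ENNReal.ofReal (5 * δ) := by
        rw [Finset.sum_const, entropyNum, Set.ncard_eq_toFinset_card _ hfin, nsmul_eq_mul]

lemma layer (a : ℝ) (ha : a ∈ Set.Ioo (0:ℝ) 1) {d : ℝ} (hd0 : 0 < d) (hd1 : d ≤ 1) :
    ENNReal.ofReal (d ^ (a-1)) =
      1 + ENNReal.ofReal (1-a) * ∫⁻ l in Set.Icc d 1, ENNReal.ofReal (l ^ (a-2)) := by
  obtain ⟨ha0, ha1⟩ := ha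
  have hInt : IntegrableOn (fun x : ℝ => x ^ (a-2)) (Set.Ioc d 1) := by
    rw [← intervalIntegrable_iff_integrableOn_Ioc_of_le hd1]
    exact intervalIntegral.intervalIntegrable_rpow (Or.inr (by
      rw [Set.uIcc_of_le hd1]; rintro ⟨h, -⟩; linarith))
  have hpos : 0 ≤ᵐ[volume.restrict (Set.Ioc d 1)] fun x : ℝ => x ^ (a-2) := by
    filter_upwards [ae_restrict_mem measurableSet_Ioc] with x hx
    exact Real.rpow_nonneg (by linarith [hx.1]) _
  have hIoc : (∫⁻ l in Set.Ioc d 1, ENNReal.ofReal (l ^ (a-2))) =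
      ENNReal.ofReal ((1 - d ^ (a-1))/(a-1)) := by
    rw [← ofReal_integral_eq_lintegral_ofReal hInt hpos]
    congr 1
    rw [← intervalIntegral.integral_of_le hd1,
      integral_rpow (Or.inr ⟨by linarith, by rw [Set.uIcc_of_le hd1]; rintro ⟨h, -⟩; linarith⟩)]
    have h21 : a - 2 + 1 = a - 1 := by ring
    rw [h21, Real.one_rpow]
  have hIcc : (∫⁻ l in Set.Icc d 1, ENNReal.ofReal (l ^ (a-2))) =
      ∫⁻ l in Set.Ioc d 1, ENNReal.ofReal (l ^ (a-2)) :=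
    setLIntegral_congr Ioc_ae_eq_Icc.symm
  have hge : (1:ℝ) ≤ d ^ (a-1) := by
    have := Real.rpow_le_rpow_of_exponent_ge hd0 hd1 (by linarith : a - 1 ≤ (0:ℝ))
    rwa [Real.rpow_zero] at this
  rw [hIcc, hIoc, ← ENNReal.ofReal_mul (by linarith)]
  have hne : a - 1 ≠ 0 := by linarith
  have heq : ∀ x : ℝ, (1-a) * ((1 - x)/(a-1)) = x - 1 := by
    intro x; field_simp; ring
  rw [heq, ← ENNReal.ofReal_one, ← ENNReal.ofReal_add (by norm_num) (by linarith)]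
  norm_num

theorem stmt1 (a : ℝ) (ha : a ∈ Set.Ioo (0 : ℝ) 1) :
    ∃ C : ℝ, 0 < C ∧
      ∀ E : Set ℝ, E.Nonempty → E ⊆ Set.Icc 1 2 →
        (∫⁻ t in Set.Icc (1 : ℝ) 2,
            ENNReal.ofReal (Metric.infDist t E ^ (-1 + a))) ≤
          ENNReal.ofReal C *
            (1 + ∫⁻ lam in Set.Ioc (0 : ℝ) 1,
              ENNReal.ofReal (lam ^ a * (entropyNum E lam : ℝ) / lam)) := by
  have ha0 := ha.1
  have ha1 := ha.2
  refine ⟨5, by norm_num, fun E hne hE2 => ?_⟩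
  set F : ℝ × ℝ → ℝ≥0∞ :=
    ({q : ℝ × ℝ | Metric.infDist q.1 E ≤ q.2}.indicator
      (fun q => ENNReal.ofReal (q.2 ^ (a-2)))) with hF
  set I : ℝ≥0∞ := ∫⁻ lam in Set.Ioc (0:ℝ) 1,
      ENNReal.ofReal (lam ^ a * (entropyNum E lam : ℝ) / lam) with hI
  -- measurability facts
  have hmeasSet : MeasurableSet {q : ℝ × ℝ | Metric.infDist q.1 E ≤ q.2} :=
    (isClosed_le ((Metric.continuous_infDist_pt E).comp continuous_fst)
      continuous_snd).measurableSet
  have hFmeas : Measurable F :=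
    Measurable.indicator ((ENNReal.measurable_ofReal).comp
      (measurable_snd.pow measurable_const)) hmeasSet
  -- Step 1: pointwise bound
  have step1 : ∀ t ∈ Set.Icc (1:ℝ) 2,
      ENNReal.ofReal (Metric.infDist t E ^ (a-1)) ≤
        1 + ENNReal.ofReal (1-a) * ∫⁻ l in Set.Ioc (0:ℝ) 1, F (t, l) := by
    intro t ht
    rcases eq_or_lt_of_le (Metric.infDist_nonneg (s := E) (x := t)) with h0 | h0
    · rw [← h0, Real.zero_rpow (by linarith : a - 1 ≠ 0)]
      simp
    · set d := Metric.infDist t E with hd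
      have hd1 : d ≤ 1 := by
        obtain ⟨x, hxE⟩ := hne
        have h1 := (hE2 hxE).1
        have h2 := (hE2 hxE).2
        calc d ≤ dist t x := Metric.infDist_le_dist_of_mem hxE
          _ ≤ 1 := by rw [Real.dist_eq, abs_le]; constructor <;> linarith [ht.1, ht.2]
      have hset : ∀ l : ℝ, F (t, l) = (Set.Ici d).indicator
          (fun l' => ENNReal.ofReal (l' ^ (a-2))) l := by
        intro l
        simp only [hF, Set.indicator_apply, Set.mem_setOf_eq, Set.mem_Ici]
        rfl
      have hcalc : (∫⁻ l in Set.Ioc (0:ℝ) 1, F (t, l)) =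
          ∫⁻ l in Set.Icc d 1, ENNReal.ofReal (l ^ (a-2)) := by
        have hseteq : Set.Ici d ∩ Set.Ioc 0 1 = Set.Icc d 1 := by
          ext l
          simp only [Set.mem_inter_iff, Set.mem_Ici, Set.mem_Ioc, Set.mem_Icc]
          constructor
          · rintro ⟨h1, h2, h3⟩; exact ⟨h1, h3⟩
          · rintro ⟨h1, h2⟩; exact ⟨h1, by linarith, h2⟩
        simp only [hset]
        rw [lintegral_indicator measurableSet_Ici, Measure.restrict_restrict measurableSet_Ici,
          hseteq]
      rw [hcalc, ← layer a ⟨ha0, ha1⟩ h0 hd1]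
  -- Step 2: integrate the pointwise bound
  have step2 : (∫⁻ t in Set.Icc (1:ℝ) 2, ENNReal.ofReal (Metric.infDist t E ^ (a-1))) ≤
      ∫⁻ t in Set.Icc (1:ℝ) 2,
        (1 + ENNReal.ofReal (1-a) * ∫⁻ l in Set.Ioc (0:ℝ) 1, F (t, l)) := by
    refine lintegral_mono_ae ?_
    filter_upwards [ae_restrict_mem measurableSet_Icc] with t ht
    exact step1 t ht
  -- split the integral
  have step3 : (∫⁻ t in Set.Icc (1:ℝ) 2,
        (1 + ENNReal.ofReal (1-a) * ∫⁻ l in Set.Ioc (0:ℝ) 1, F (t, l))) =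
      1 + ENNReal.ofReal (1-a) *
        ∫⁻ t in Set.Icc (1:ℝ) 2, ∫⁻ l in Set.Ioc (0:ℝ) 1, F (t, l) := by
    rw [lintegral_add_left measurable_const, lintegral_const,
      lintegral_const_mul' _ _ ENNReal.ofReal_ne_top, Measure.restrict_apply_univ,
      Real.volume_Icc]
    norm_num
  -- Tonelli
  have swap : (∫⁻ t in Set.Icc (1:ℝ) 2, ∫⁻ l in Set.Ioc (0:ℝ) 1, F (t, l)) =
      ∫⁻ l in Set.Ioc (0:ℝ) 1, ∫⁻ t in Set.Icc (1:ℝ) 2, F (t, l) := by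
    have := MeasureTheory.lintegral_lintegral_swap
      (μ := volume.restrict (Set.Icc (1:ℝ) 2)) (ν := volume.restrict (Set.Ioc (0:ℝ) 1))
      (f := fun t l => F (t, l)) ?_
    · exact this
    · have : Function.uncurry (fun t l => F (t, l)) = F := by
        funext q; rfl
      rw [this]
      exact hFmeas.aemeasurable
  -- inner integral bound
  have inner : ∀ l ∈ Set.Ioc (0:ℝ) 1,
      (∫⁻ t in Set.Icc (1:ℝ) 2, F (t, l)) ≤
        (entropyNum E l : ℝ≥0∞) * (ENNReal.ofReal 5 * ENNReal.ofReal (l ^ (a-2+1))) := by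
    intro l hl
    have hl0 : 0 < l := hl.1
    have hmeasS : MeasurableSet {t : ℝ | Metric.infDist t E ≤ l} :=
      (isClosed_le (Metric.continuous_infDist_pt E) continuous_const).measurableSet
    have hval : ∀ t : ℝ, F (t, l) = ({t' : ℝ | Metric.infDist t' E ≤ l}).indicator
        (fun _ => ENNReal.ofReal (l ^ (a-2))) t := by
      intro t
      simp only [hF, Set.indicator_apply, Set.mem_setOf_eq]
    calc (∫⁻ t in Set.Icc (1:ℝ) 2, F (t, l))
        = ENNReal.ofReal (l ^ (a-2)) *
            volume ({t : ℝ | Metric.infDist t E ≤ l} ∩ Set.Icc 1 2) := by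
          simp only [hval]
          rw [lintegral_indicator hmeasS, Measure.restrict_restrict hmeasS,
            setLIntegral_const]
      _ ≤ ENNReal.ofReal (l ^ (a-2)) * ((entropyNum E l : ℝ≥0∞) * ENNReal.ofReal (5 * l)) :=
          mul_le_mul_right (measure_near E hne hE2 hl0) _
      _ = (entropyNum E l : ℝ≥0∞) * (ENNReal.ofReal 5 * ENNReal.ofReal (l ^ (a-2+1))) := by
          rw [Real.rpow_add_one hl0.ne' (a-2),
            ← ENNReal.ofReal_mul (by norm_num : (0:ℝ) ≤ 5),
            show (5:ℝ) * (l ^ (a-2) * l) = l ^ (a-2) * (5 * l) by ring,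
            ENNReal.ofReal_mul (Real.rpow_nonneg hl0.le _)]
          ring
  -- identify I
  have hIeq : I = ∫⁻ l in Set.Ioc (0:ℝ) 1,
      (entropyNum E l : ℝ≥0∞) * ENNReal.ofReal (l ^ (a-1)) := by
    rw [hI]
    refine setLIntegral_congr_fun measurableSet_Ioc ?_
    intro l hl
    have hl0 : (0:ℝ) < l := hl.1
    beta_reduce
    rw [Real.rpow_sub_one hl0.ne' a] at *
    rw [show l ^ a * (entropyNum E l : ℝ) / l = (entropyNum E l : ℝ) * (l ^ a / l) by ring,
      ENNReal.ofReal_mul (by positivity), ENNReal.ofReal_natCast]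
  -- combine
  have main : (∫⁻ t in Set.Icc (1:ℝ) 2, ENNReal.ofReal (Metric.infDist t E ^ (a-1))) ≤
      1 + ENNReal.ofReal (1-a) * (ENNReal.ofReal 5 * I) := by
    refine step2.trans ?_
    rw [step3, swap]
    gcongr
    calc (∫⁻ l in Set.Ioc (0:ℝ) 1, ∫⁻ t in Set.Icc (1:ℝ) 2, F (t, l))
        ≤ ∫⁻ l in Set.Ioc (0:ℝ) 1,
            (entropyNum E l : ℝ≥0∞) * (ENNReal.ofReal 5 * ENNReal.ofReal (l ^ (a-2+1))) := by
          refine lintegral_mono_ae ?_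
          filter_upwards [ae_restrict_mem measurableSet_Ioc] with l hl
          exact inner l hl
      _ = ENNReal.ofReal 5 * I := by
          rw [hIeq, ← lintegral_const_mul' _ _ ENNReal.ofReal_ne_top]
          refine lintegral_congr fun l => ?_
          rw [show a - 2 + 1 = a - 1 by ring]
          ring
  -- final constant juggling
  calc (∫⁻ t in Set.Icc (1:ℝ) 2, ENNReal.ofReal (Metric.infDist t E ^ (-1 + a)))
      = ∫⁻ t in Set.Icc (1:ℝ) 2, ENNReal.ofReal (Metric.infDist t E ^ (a-1)) := by
        simp only [neg_add_eq_sub]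
    _ ≤ 1 + ENNReal.ofReal (1-a) * (ENNReal.ofReal 5 * I) := main
    _ ≤ ENNReal.ofReal 5 * (1 + I) := by
        rw [mul_add, mul_one]
        refine add_le_add ?_ ?_
        · calc (1:ℝ≥0∞) = ENNReal.ofReal 1 := by simp
            _ ≤ ENNReal.ofReal 5 := by
              exact ENNReal.ofReal_le_ofReal (by norm_num)
        · rw [← mul_assoc]
          refine mul_le_mul_left ?_ _
          rw [← ENNReal.ofReal_mul (by linarith)]
          exact ENNReal.ofReal_le_ofReal (by nlinarith)
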